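/- Let F ∈ F_q[X_0,...,X_{n+1}] be a homogeneous polynomial of degree q+1 that vanishes at every point of F_q^{n+2}. Then there exists an (n+2)×(n+2) matrix A over F_q with A^T = −A such that F(X) = X · A · (X_0^q, ..., X_{n+1}^q)^T, i.e., F = Σ_{i<j} a_{ij}(X_i X_j^q − X_i^q X_j). -/

import Mathlib

open Matrix

namespace Stmt9Aux

/-- reduction of an exponent modulo `q-1`, preserving positivity -/
def r (q e : ℕ) : ℕ := if e = 0 then 0 else (e - 1) % (q - 1) + 1

lemma r_zero (q : ℕ) : r q 0 = 0 := rfl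

lemma r_eq_zero_iff {q e : ℕ} : r q e = 0 ↔ e = 0 := by
  unfold r; split <;> omega

lemma r_le_self (q e : ℕ) : r q e ≤ e := by
  unfold r; split
  · omega
  · have := Nat.mod_le (e - 1) (q - 1); omega

lemma r_le {q : ℕ} (hq : 2 ≤ q) (e : ℕ) : r q e ≤ q - 1 := by
  unfold r; split
  · omega
  · have : (e - 1) % (q - 1) < q - 1 := Nat.mod_lt _ (by omega)
    omega

lemma r_of_le {q e : ℕ} (hq : 2 ≤ q) (he : e ≤ q - 1) : r q e = e := by
  unfold r; split
  · omega
  · rw [Nat.mod_eq_of_lt (by omega)]; omega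

lemma r_one {q : ℕ} (hq : 2 ≤ q) : r q 1 = 1 := r_of_le hq (by omega)

lemma r_q {q : ℕ} (hq : 2 ≤ q) : r q q = 1 := by
  unfold r
  rw [if_neg (by omega), Nat.mod_self]

lemma r_exists {q e : ℕ} (he : e ≠ 0) : ∃ k, e = (q - 1) * k + r q e := by
  refine ⟨(e - 1) / (q - 1), ?_⟩
  unfold r
  rw [if_neg he]
  have := Nat.div_add_mod (e - 1) (q - 1)
  omega

lemma r_eq_one_iff {q e : ℕ} (hq : 2 ≤ q) (he : e ≠ 0) : r q e = 1 ↔ (q - 1) ∣ (e - 1) := by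
  unfold r
  rw [if_neg he]
  rw [Nat.dvd_iff_mod_eq_zero]
  omega

lemma pow_r {K : Type*} [Field K] [Fintype K] {q : ℕ} (hK : Fintype.card K = q)
    (a : K) (e : ℕ) : a ^ r q e = a ^ e := by
  rcases eq_or_ne e 0 with rfl | he
  · rfl
  obtain ⟨k, hk⟩ := r_exists (q := q) he
  rcases eq_or_ne a 0 with rfl | ha
  · rw [zero_pow (fun h => he (r_eq_zero_iff.mp h)), zero_pow he]
  · conv_rhs => rw [hk]
    rw [pow_add, pow_mul, ← hK, FiniteField.pow_card_sub_one_eq_one a ha, one_pow, one_mul]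

/-- reduction of a monomial -/
noncomputable def red (q : ℕ) {σ : Type*} (m : σ →₀ ℕ) : σ →₀ ℕ := Finsupp.mapRange (r q) (r_zero q) m

lemma red_apply {q : ℕ} {σ : Type*} (m : σ →₀ ℕ) (k : σ) : red q m k = r q (m k) :=
  Finsupp.mapRange_apply

lemma single_add_single_inj {N q : ℕ} (hq : 2 ≤ q) {i j i' j' : Fin N}
    (h : Finsupp.single i 1 + Finsupp.single j q = Finsupp.single i' 1 + Finsupp.single j' q) :
    i = i' ∧ j = j' := by
  have hk : ∀ k : Fin N, (if i = k then 1 else 0) + (if j = k then q else 0)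
      = (if i' = k then 1 else 0) + (if j' = k then q else 0) := by
    intro k
    have := DFunLike.congr_fun h k
    simpa [Finsupp.single_apply] using this
  constructor
  · by_contra hii
    have h1 := hk i
    rw [if_pos rfl, if_neg (show ¬i' = i from fun h => hii h.symm)] at h1
    split_ifs at h1 <;> omega
  · by_contra hjj
    have h1 := hk j
    rw [if_pos rfl, if_neg (show ¬j' = j from fun h => hjj h.symm)] at h1
    split_ifs at h1 <;> omega

end Stmt9Aux

lemma eq_zero_of_eval_eq_zero' {K : Type*} [Field K] [Fintype K] {N : ℕ}
    (p : MvPolynomial (Fin N) K) (h : ∀ v : Fin N → K, MvPolynomial.eval v p = 0)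
    (hp : ∀ s ∈ p.support, ∀ i, s i ≤ Fintype.card K - 1) : p = 0 := by
  classical
  haveI : Small.{0} K := Countable.toSmall K
  letI : Fintype (Shrink.{0} K) := Fintype.ofEquiv K (equivShrink K)
  let φ : Shrink.{0} K ≃+* K := Shrink.ringEquiv K
  let ψ : K →+* Shrink.{0} K := φ.symm.toRingHom
  have hinj : Function.Injective ψ := φ.symm.injective
  have hcomp : (φ : Shrink.{0} K →+* K).comp ψ = RingHom.id K := by
    ext x; simp [ψ]
  suffices h0 : MvPolynomial.map ψ p = 0 by
    exact MvPolynomial.map_injective ψ hinj (h0.trans (map_zero (MvPolynomial.map ψ)).symm)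
  apply MvPolynomial.eq_zero_of_eval_eq_zero
  · intro v
    have h2 : (φ : Shrink.{0} K →+* K) ((MvPolynomial.eval v) (MvPolynomial.map ψ p)) = 0 := by
      rw [MvPolynomial.eval_map, MvPolynomial.eval₂_comp_left (φ : Shrink.{0} K →+* K) ψ v p,
        hcomp]
      rw [MvPolynomial.eval₂_id]
      exact h _
    exact φ.injective ((by simpa using h2 : φ _ = 0).trans (map_zero φ).symm)
  · rw [MvPolynomial.mem_restrictDegree]
    intro s hs i
    rw [MvPolynomial.mem_support_iff, MvPolynomial.coeff_map] at hs
    have hmem : s ∈ p.support := MvPolynomial.mem_support_iff.mpr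
      (fun h0 => hs (by rw [h0, map_zero]))
    have hcard : Fintype.card (Shrink.{0} K) = Fintype.card K :=
      Fintype.card_congr (equivShrink K).symm
    rw [hcard]
    exact hp s hmem i

open Stmt9Aux MvPolynomial Finsupp

/-- a homogeneous polynomial of degree `q+1` vanishing at every point of
`F_q^{n+2}` has the form `F = X A (X^q)ᵗ = Σ_{i,j} a_{ij} X_i X_j^q` for an alternating
matrix `A` (`Aᵀ = -A` and zero diagonal). -/
theorem stmt9 (q n : ℕ) (K : Type*) [Field K] [Fintype K] (hK : Fintype.card K = q)
    (F : MvPolynomial (Fin (n + 2)) K) (hF : F.IsHomogeneous (q + 1))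
    (hvan : ∀ x : Fin (n + 2) → K, MvPolynomial.eval x F = 0) :
    ∃ A : Matrix (Fin (n + 2)) (Fin (n + 2)) K, Aᵀ = -A ∧ (∀ i, A i i = 0) ∧
      F = ∑ i, ∑ j, MvPolynomial.C (A i j) * MvPolynomial.X i * MvPolynomial.X j ^ q := by
  classical
  have hq2 : 2 ≤ q := by rw [← hK]; exact Fintype.one_lt_card
  -- degrees of monomials in the support
  have hdeg : ∀ m : Fin (n + 2) →₀ ℕ, m ∈ F.support → ∑ k, m k = q + 1 := by
    intro m hm
    have h1 : m.degree = q + 1 := by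
      rw [Finsupp.degree_eq_weight_one]
      exact hF (MvPolynomial.mem_support_iff.mp hm)
    rw [← h1, Finsupp.degree]
    exact (Finset.sum_subset (Finset.subset_univ _)
      (fun k _ hk => Finsupp.notMem_support_iff.mp hk)).symm
  -- the reduced polynomial vanishes identically
  have hH0 : (∑ m ∈ F.support, monomial (red q m) (coeff m F)) = 0 := by
    refine eq_zero_of_eval_eq_zero' _ (fun x => ?_) ?_
    · rw [map_sum]
      have : ∀ m ∈ F.support, eval x (monomial (red q m) (coeff m F))
          = eval x (monomial m (coeff m F)) := by
        intro m _
        rw [MvPolynomial.eval_monomial, MvPolynomial.eval_monomial]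
        congr 1
        rw [red, Finsupp.prod_mapRange_index (fun a => pow_zero _)]
        exact Finsupp.prod_congr fun k _ => pow_r hK (x k) (m k)
      rw [Finset.sum_congr rfl this, ← map_sum, MvPolynomial.support_sum_monomial_coeff]
      exact hvan x
    · intro s hs i
      rw [MvPolynomial.mem_support_iff, MvPolynomial.coeff_sum] at hs
      obtain ⟨m, _, hne⟩ := Finset.exists_ne_zero_of_sum_ne_zero hs
      rw [MvPolynomial.coeff_monomial] at hne
      have hrm : red q m = s := by by_contra h; rw [if_neg h] at hne; exact hne rfl
      rw [hK, ← hrm, red_apply]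
      exact r_le hq2 _
  have hcoeff : ∀ μ, (∑ m ∈ F.support, if red q m = μ then coeff m F else 0) = 0 := by
    intro μ
    have h := congrArg (MvPolynomial.coeff μ) hH0
    simpa [MvPolynomial.coeff_sum, MvPolynomial.coeff_monomial] using h
  have ite_coeff : ∀ μ : Fin (n + 2) →₀ ℕ,
      (if μ ∈ F.support then coeff μ F else 0) = coeff μ F := by
    intro μ; split_ifs with h
    · rfl
    · exact (MvPolynomial.notMem_support_iff.mp h).symm
  -- claim 2 : diagonal coefficients vanish
  have hdiag : ∀ i0, coeff (Finsupp.single i0 (q + 1)) F = 0 := by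
    intro i0
    have h := hcoeff (Finsupp.single i0 (r q (q + 1)))
    have key : ∀ m ∈ F.support,
        (if red q m = Finsupp.single i0 (r q (q + 1)) then coeff m F else 0)
          = (if m = Finsupp.single i0 (q + 1) then coeff m F else 0) := by
      intro m hm
      refine if_congr ⟨fun h' => ?_, fun h' => ?_⟩ rfl rfl
      · have hsupp : ∀ k, k ≠ i0 → m k = 0 := by
          intro k hk
          have h0 : red q m k = 0 := by
            rw [h', Finsupp.single_apply, if_neg (fun hc => hk hc.symm)]
          rw [red_apply] at h0
          exact r_eq_zero_iff.mp h0
        have hmi : m i0 = q + 1 := by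
          rw [← hdeg m hm]
          exact (Finset.sum_eq_single_of_mem i0 (Finset.mem_univ _)
            (fun b _ hb => hsupp b hb)).symm
        ext k
        rw [Finsupp.single_apply]
        rcases eq_or_ne k i0 with rfl | hk
        · rw [if_pos rfl]; exact hmi
        · rw [if_neg (fun hc => hk hc.symm)]; exact hsupp k hk
      · subst h'
        exact Finsupp.mapRange_single
    rw [Finset.sum_congr rfl key, Finset.sum_ite_eq' F.support, ite_coeff] at h
    exact h
  -- claim : skew-symmetry
  have hskew : ∀ i j : Fin (n + 2), i ≠ j →
      coeff (Finsupp.single i 1 + Finsupp.single j q) F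
        + coeff (Finsupp.single j 1 + Finsupp.single i q) F = 0 := by
    intro i j hij
    set m0 : Fin (n + 2) →₀ ℕ := Finsupp.single i 1 + Finsupp.single j q with hm0def
    set m1 : Fin (n + 2) →₀ ℕ := Finsupp.single j 1 + Finsupp.single i q with hm1def
    have hm0i : m0 i = 1 := by
      rw [hm0def, Finsupp.add_apply, Finsupp.single_apply, Finsupp.single_apply,
        if_pos rfl, if_neg (fun hc => hij hc.symm)]
      omega
    have hm0j : m0 j = q := by
      rw [hm0def, Finsupp.add_apply, Finsupp.single_apply, Finsupp.single_apply,
        if_neg hij, if_pos rfl]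
      omega
    have hm1i : m1 i = q := by
      rw [hm1def, Finsupp.add_apply, Finsupp.single_apply, Finsupp.single_apply,
        if_neg (fun hc => hij hc.symm), if_pos rfl]
      omega
    have hm1j : m1 j = 1 := by
      rw [hm1def, Finsupp.add_apply, Finsupp.single_apply, Finsupp.single_apply,
        if_pos rfl, if_neg hij]
      omega
    have hm0z : ∀ k, k ≠ i → k ≠ j → m0 k = 0 := by
      intro k hki hkj
      rw [hm0def, Finsupp.add_apply, Finsupp.single_apply, Finsupp.single_apply,
        if_neg (fun hc => hki hc.symm), if_neg (fun hc => hkj hc.symm)]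
      omega
    have hm1z : ∀ k, k ≠ i → k ≠ j → m1 k = 0 := by
      intro k hki hkj
      rw [hm1def, Finsupp.add_apply, Finsupp.single_apply, Finsupp.single_apply,
        if_neg (fun hc => hkj hc.symm), if_neg (fun hc => hki hc.symm)]
      omega
    have hm01 : m0 ≠ m1 := by
      intro hc
      have := congrArg (fun f : Fin (n + 2) →₀ ℕ => f i) hc
      simp only [hm0i, hm1i] at this
      omega
    set μ : Fin (n + 2) →₀ ℕ := Finsupp.single i 1 + Finsupp.single j 1 with hμdef
    have hμi : μ i = 1 := by
      rw [hμdef, Finsupp.add_apply, Finsupp.single_apply, Finsupp.single_apply,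
        if_pos rfl, if_neg (fun hc => hij hc.symm)]
      omega
    have hμj : μ j = 1 := by
      rw [hμdef, Finsupp.add_apply, Finsupp.single_apply, Finsupp.single_apply,
        if_neg hij, if_pos rfl]
    have hμz : ∀ k, k ≠ i → k ≠ j → μ k = 0 := by
      intro k hki hkj
      rw [hμdef, Finsupp.add_apply, Finsupp.single_apply, Finsupp.single_apply,
        if_neg (fun hc => hki hc.symm), if_neg (fun hc => hkj hc.symm)]
      omega
    have hred0 : red q m0 = μ := by
      ext k
      rw [red_apply]
      rcases eq_or_ne k i with rfl | hki
      · rw [hm0i, hμi]; exact r_one hq2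
      rcases eq_or_ne k j with rfl | hkj
      · rw [hm0j, hμj]; exact r_q hq2
      · rw [hm0z k hki hkj, hμz k hki hkj]; exact r_zero q
    have hred1 : red q m1 = μ := by
      ext k
      rw [red_apply]
      rcases eq_or_ne k i with rfl | hki
      · rw [hm1i, hμi]; exact r_q hq2
      rcases eq_or_ne k j with rfl | hkj
      · rw [hm1j, hμj]; exact r_one hq2
      · rw [hm1z k hki hkj, hμz k hki hkj]; exact r_zero q
    have key : ∀ m ∈ F.support, (if red q m = μ then coeff m F else 0)
        = (if m = m0 then coeff m F else 0) + (if m = m1 then coeff m F else 0) := by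
      intro m hm
      by_cases h : red q m = μ
      · rw [if_pos h]
        have hz : ∀ k, k ≠ i → k ≠ j → m k = 0 := by
          intro k hki hkj
          have hzz : red q m k = 0 := by rw [h]; exact hμz k hki hkj
          rw [red_apply] at hzz
          exact r_eq_zero_iff.mp hzz
        have hri : r q (m i) = 1 := by rw [← red_apply, h, hμi]
        have hrj : r q (m j) = 1 := by rw [← red_apply, h, hμj]
        have hine : m i ≠ 0 := fun h0 => by rw [h0, r_zero] at hri; exact one_ne_zero hri.symm
        have hjne : m j ≠ 0 := fun h0 => by rw [h0, r_zero] at hrj; exact one_ne_zero hrj.symm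
        have hsum : m i + m j = q + 1 := by
          have hd := hdeg m hm
          have hsub : ∑ k ∈ ({i, j} : Finset (Fin (n + 2))), m k = ∑ k, m k :=
            Finset.sum_subset (Finset.subset_univ _) (by
              intro k _ hk
              simp only [Finset.mem_insert, Finset.mem_singleton] at hk
              push_neg at hk
              exact hz k hk.1 hk.2)
          rw [Finset.sum_pair hij] at hsub
          omega
        have d1 : (q - 1) ∣ (m i - 1) := (r_eq_one_iff hq2 hine).mp hri
        have d2 : (q - 1) ∣ (m j - 1) := (r_eq_one_iff hq2 hjne).mp hrj
        have hcases : m i = 1 ∨ m i = q := by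
          rcases Nat.lt_or_ge (m i - 1) (q - 1) with hlt | hge
          · left; have := Nat.eq_zero_of_dvd_of_lt d1 hlt; omega
          · right
            have hlt : m j - 1 < q - 1 := by omega
            have := Nat.eq_zero_of_dvd_of_lt d2 hlt
            omega
        have hext : ∀ (a b : ℕ), m i = a → m j = b →
            ∀ m' : Fin (n + 2) →₀ ℕ, m' i = a → m' j = b →
            (∀ k, k ≠ i → k ≠ j → m' k = 0) → m = m' := by
          intro a b ha hb m' ha' hb' hz'
          ext k
          rcases eq_or_ne k i with rfl | hki
          · rw [ha, ha']
          rcases eq_or_ne k j with rfl | hkj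
          · rw [hb, hb']
          · rw [hz k hki hkj, hz' k hki hkj]
        rcases hcases with h1 | h1
        · have h2 : m j = q := by omega
          have hmm : m = m0 := hext 1 q h1 h2 m0 hm0i hm0j hm0z
          rw [if_pos hmm, if_neg (by rw [hmm]; exact hm01), add_zero]
        · have h2 : m j = 1 := by omega
          have hmm : m = m1 := hext q 1 h1 h2 m1 hm1i hm1j hm1z
          rw [if_pos hmm, if_neg (by rw [hmm]; exact fun hc => hm01 hc.symm), zero_add]
      · rw [if_neg h, if_neg (fun hc => h (by rw [hc]; exact hred0)),
          if_neg (fun hc => h (by rw [hc]; exact hred1)), add_zero]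
    have h := hcoeff μ
    rw [Finset.sum_congr rfl key, Finset.sum_add_distrib, Finset.sum_ite_eq' F.support,
      Finset.sum_ite_eq' F.support, ite_coeff, ite_coeff] at h
    exact h
  -- claim 3 : coefficients of monomials with all exponents ≤ q-1 vanish
  have hsmall : ∀ μ : Fin (n + 2) →₀ ℕ, (∀ k, μ k ≤ q - 1) → coeff μ F = 0 := by
    intro μ hμ
    by_cases hmem : μ ∈ F.support
    swap
    · exact MvPolynomial.notMem_support_iff.mp hmem
    have hredμ : red q μ = μ := by
      ext k; rw [red_apply]; exact r_of_le hq2 (hμ k)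
    have h := hcoeff μ
    have key : ∀ m ∈ F.support, (if red q m = μ then coeff m F else 0)
        = (if m = μ then coeff m F else 0) := by
      intro m hm
      refine if_congr ⟨fun h' => ?_, fun h' => by rw [h', hredμ]⟩ rfl rfl
      have hdm := hdeg m hm
      have hdμ := hdeg μ hmem
      have hle : ∀ k, r q (m k) ≤ m k := fun k => r_le_self _ _
      have hsum : ∑ k, r q (m k) = ∑ k, m k := by
        calc ∑ k, r q (m k) = ∑ k, μ k := by
              refine Finset.sum_congr rfl fun k _ => ?_
              rw [← red_apply, h']
          _ = q + 1 := hdμ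
          _ = ∑ k, m k := hdm.symm
      have heach : ∀ k : Fin (n + 2), m k = r q (m k) := by
        intro k
        by_contra hne
        have hlt : r q (m k) < m k := lt_of_le_of_ne (hle k) (fun hc => hne hc.symm)
        have := Finset.sum_lt_sum (fun k _ => hle k) ⟨k, Finset.mem_univ k, hlt⟩
        omega
      ext k
      rw [← h', red_apply]
      exact heach k
    rw [Finset.sum_congr rfl key, Finset.sum_ite_eq' F.support, ite_coeff] at h
    exact h
  -- assemble
  refine ⟨fun i j => if i = j then 0 else coeff (Finsupp.single i 1 + Finsupp.single j q) F,
    ?_, fun i => if_pos rfl, ?_⟩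
  · ext i j
    change (if j = i then (0:K) else coeff (Finsupp.single j 1 + Finsupp.single i q) F)
      = -(if i = j then (0:K) else coeff (Finsupp.single i 1 + Finsupp.single j q) F)
    rcases eq_or_ne i j with rfl | hij
    · simp
    · rw [if_neg (Ne.symm hij), if_neg hij]
      have := hskew i j hij
      linear_combination this
  · -- F = ∑ i, ∑ j, C (A i j) * X i * X j ^ q
    have hmono : ∀ (i j : Fin (n + 2)) (c : K),
        (C c * X i * X j ^ q : MvPolynomial (Fin (n + 2)) K)
          = monomial (Finsupp.single i 1 + Finsupp.single j q) c := by
      intro i j c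
      rw [show (X i : MvPolynomial (Fin (n + 2)) K) = X i ^ 1 from (pow_one _).symm,
        X_pow_eq_monomial, X_pow_eq_monomial, mul_assoc, monomial_mul,
        C_mul_monomial, one_mul, mul_one]
    apply MvPolynomial.ext
    intro μ
    have hrhs : ∀ (i j : Fin (n + 2)) (c : K),
        coeff μ (C c * X i * X j ^ q : MvPolynomial (Fin (n + 2)) K)
          = if Finsupp.single i 1 + Finsupp.single j q = μ then c else 0 := by
      intro i j c
      rw [hmono, MvPolynomial.coeff_monomial]
    simp only [MvPolynomial.coeff_sum, hrhs]
    by_cases hex : ∃ i j : Fin (n + 2), i ≠ j ∧ μ = Finsupp.single i 1 + Finsupp.single j q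
    · obtain ⟨i0, j0, hij0, rfl⟩ := hex
      have hinner : ∀ i : Fin (n + 2),
          (∑ j, if Finsupp.single i 1 + Finsupp.single j q
              = Finsupp.single i0 1 + Finsupp.single j0 q
            then (if i = j then 0 else coeff (Finsupp.single i 1 + Finsupp.single j q) F)
            else 0)
          = if i = i0 then (if i0 = j0 then 0
              else coeff (Finsupp.single i0 1 + Finsupp.single j0 q) F) else 0 := by
        intro i
        by_cases hi : i = i0
        · subst hi
          rw [if_pos rfl]
          rw [Finset.sum_eq_single j0]
          · rw [if_pos rfl]
          · intro b _ hb
            rw [if_neg (fun hc => hb (single_add_single_inj hq2 hc).2)]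
          · intro hc; exact absurd (Finset.mem_univ _) hc
        · rw [if_neg hi]
          refine Finset.sum_eq_zero fun b _ => ?_
          rw [if_neg (fun hc => hi (single_add_single_inj hq2 hc).1)]
      rw [Finset.sum_congr rfl (fun i _ => hinner i), Finset.sum_ite_eq' Finset.univ,
        if_pos (Finset.mem_univ _), if_neg hij0]
    · have hrhs0 : (∑ i : Fin (n + 2), ∑ j : Fin (n + 2),
          if Finsupp.single i 1 + Finsupp.single j q = μ
            then (if i = j then 0 else coeff (Finsupp.single i 1 + Finsupp.single j q) F)
            else 0) = 0 := by
        refine Finset.sum_eq_zero fun i _ => Finset.sum_eq_zero fun j _ => ?_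
        split_ifs with hc hij
        · rfl
        · exact absurd ⟨i, j, hij, hc.symm⟩ hex
        · rfl
      rw [hrhs0]
      by_cases hmem : μ ∈ F.support
      swap
      · exact MvPolynomial.notMem_support_iff.mp hmem
      have hd : ∑ k, μ k = q + 1 := hdeg μ hmem
      by_cases hbig : ∃ k, q ≤ μ k
      · obtain ⟨k0, hk0⟩ := hbig
        have hk0le : μ k0 ≤ q + 1 := by
          have := Finset.single_le_sum (f := (μ : Fin (n + 2) → ℕ))
            (fun _ _ => Nat.zero_le _) (Finset.mem_univ k0)
          omega
        have hrest : ∑ k ∈ Finset.univ.erase k0, μ k = q + 1 - μ k0 := by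
          have := Finset.add_sum_erase Finset.univ (μ : Fin (n + 2) → ℕ) (Finset.mem_univ k0)
          omega
        have hqq : μ k0 = q ∨ μ k0 = q + 1 := by omega
        rcases hqq with hq' | hq'
        · exfalso
          rw [hq'] at hrest
          have h1 : ∃ k1 ∈ Finset.univ.erase k0, μ k1 ≠ 0 := by
            by_contra hall
            push_neg at hall
            rw [Finset.sum_eq_zero hall] at hrest
            omega
          obtain ⟨k1, hk1mem, hk1⟩ := h1
          have hk1ne : k1 ≠ k0 := Finset.ne_of_mem_erase hk1mem
          have hk1le : μ k1 ≤ 1 := by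
            have := Finset.single_le_sum (f := (μ : Fin (n + 2) → ℕ))
              (fun _ _ => Nat.zero_le _) hk1mem
            omega
          have hothers : ∀ k, k ≠ k0 → k ≠ k1 → μ k = 0 := by
            intro k hkk0 hkk1
            have hsub : ∑ k' ∈ ({k, k1} : Finset (Fin (n + 2))), μ k'
                ≤ ∑ k' ∈ Finset.univ.erase k0, μ k' := by
              refine Finset.sum_le_sum_of_subset ?_
              intro x hx
              simp only [Finset.mem_insert, Finset.mem_singleton] at hx
              rcases hx with rfl | rfl
              · exact Finset.mem_erase.mpr ⟨hkk0, Finset.mem_univ _⟩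
              · exact Finset.mem_erase.mpr ⟨hk1ne, Finset.mem_univ _⟩
            rw [Finset.sum_pair hkk1] at hsub
            omega
          refine hex ⟨k1, k0, hk1ne, ?_⟩
          ext k
          rw [Finsupp.add_apply, Finsupp.single_apply, Finsupp.single_apply]
          rcases eq_or_ne k k1 with rfl | hkk1
          · rw [if_pos rfl, if_neg (fun hc => hk1ne hc.symm)]
            omega
          rcases eq_or_ne k k0 with rfl | hkk0
          · rw [if_neg (fun hc => hkk1 hc.symm), if_pos rfl]
            omega
          · rw [if_neg (fun hc => hkk1 hc.symm), if_neg (fun hc => hkk0 hc.symm)]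
            exact hothers k hkk0 hkk1
        · have hμeq : μ = Finsupp.single k0 (q + 1) := by
            rw [hq'] at hrest
            ext k
            rw [Finsupp.single_apply]
            rcases eq_or_ne k k0 with rfl | hk
            · rw [if_pos rfl]; exact hq'
            · rw [if_neg (fun hc => hk hc.symm)]
              have : ∀ k' ∈ Finset.univ.erase k0, μ k' = 0 := by
                intro k' hk'
                have hle := Finset.single_le_sum (f := (μ : Fin (n + 2) → ℕ))
                  (fun _ _ => Nat.zero_le _) hk'
                omega
              exact this k (Finset.mem_erase.mpr ⟨hk, Finset.mem_univ _⟩)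
          rw [hμeq]
          exact hdiag k0
      · push_neg at hbig
        exact hsmall μ (fun k => by have := hbig k; omega)
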